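/- arXiv:2601.10557 — 3 statements merged into one kernel-verified Lean document; each statement's English description precedes it below -/
import Mathlib

section
/- If H satisfies SH = H*S and SH is Hermitian positive definite, then every eigenvalue λ of H satisfies |λ| ≤ ρ(A), the spectral radius of the upper-left m×m block A of H. -/
open Matrix
open scoped ComplexOrder

noncomputable section

/-- The signature matrix `S = diag(I_m, -I_m)`. -/
def Smat (m : ℕ) : Matrix (Fin m ⊕ Fin m) (Fin m ⊕ Fin m) ℂ :=
  fromBlocks 1 0 0 (-1)

/-- Spectral radius of a complex matrix. -/
def specRad {k : Type*} [Fintype k] [DecidableEq k] (M : Matrix k k ℂ) : ℝ :=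
  sSup ((fun μ : ℂ => ‖μ‖) '' spectrum ℂ M)

lemma rayleigh {m : ℕ} {A : Matrix (Fin m) (Fin m) ℂ} (hA : A.IsHermitian) {t : ℝ}
    (ht : ∀ i, |hA.eigenvalues i| ≤ t) (u : Fin m → ℂ) :
    (star u ⬝ᵥ A *ᵥ u).re ≤ t * (star u ⬝ᵥ u).re := by
  classical
  set U : Matrix (Fin m) (Fin m) ℂ := (hA.eigenvectorUnitary : Matrix (Fin m) (Fin m) ℂ) with hU
  set w : Fin m → ℂ := star U *ᵥ u with hwdef
  have hw : star u ᵥ* U = star w := by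
    rw [hwdef, star_mulVec]
    simp [star_eq_conjTranspose]
  have key : star u ⬝ᵥ A *ᵥ u
      = star w ⬝ᵥ (diagonal (RCLike.ofReal ∘ hA.eigenvalues) : Matrix (Fin m) (Fin m) ℂ) *ᵥ w := by
    conv_lhs => rw [hA.spectral_theorem, Unitary.conjStarAlgAut_apply]
    rw [← mulVec_mulVec, ← mulVec_mulVec, dotProduct_mulVec, hw, ← hU, ← hwdef]
  have hnorm : star w ⬝ᵥ w = star u ⬝ᵥ u := by
    calc star w ⬝ᵥ w = (star u ᵥ* U) ⬝ᵥ (star U *ᵥ u) := by rw [hw, hwdef]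
      _ = star u ⬝ᵥ (U *ᵥ (star U *ᵥ u)) := (dotProduct_mulVec _ _ _).symm
      _ = star u ⬝ᵥ u := by
          rw [mulVec_mulVec, (Matrix.mem_unitaryGroup_iff).mp hA.eigenvectorUnitary.2, one_mulVec]
  have hdiag : star w ⬝ᵥ (diagonal (RCLike.ofReal ∘ hA.eigenvalues) : Matrix (Fin m) (Fin m) ℂ) *ᵥ w
      = ((∑ i, hA.eigenvalues i * Complex.normSq (w i) : ℝ) : ℂ) := by
    push_cast
    simp only [dotProduct, mulVec_diagonal, Function.comp, Pi.star_apply]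
    congr 1
    ext i
    rw [Complex.normSq_eq_conj_mul_self, Complex.star_def]
    push_cast
    rw [mul_left_comm]
    norm_cast
  have hnn : star w ⬝ᵥ w = ((∑ i, Complex.normSq (w i) : ℝ) : ℂ) := by
    push_cast
    simp only [dotProduct, Pi.star_apply]
    congr 1
    ext i
    rw [Complex.normSq_eq_conj_mul_self, Complex.star_def]
  rw [key, hdiag, ← hnorm, hnn, Complex.ofReal_re, Complex.ofReal_re, Finset.mul_sum]
  apply Finset.sum_le_sum
  intro i _
  have h1 : hA.eigenvalues i * Complex.normSq (w i) ≤ |hA.eigenvalues i| * Complex.normSq (w i) :=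
    mul_le_mul_of_nonneg_right (le_abs_self _) (Complex.normSq_nonneg _)
  exact h1.trans (mul_le_mul_of_nonneg_right (ht i) (Complex.normSq_nonneg _))

lemma conj_dot {m : ℕ} (M : Matrix (Fin m) (Fin m) ℂ) (u w : Fin m → ℂ) :
    (starRingEnd ℂ) (star u ⬝ᵥ M *ᵥ w) = star w ⬝ᵥ (M.map (starRingEnd ℂ))ᵀ *ᵥ u := by
  simp only [dotProduct, mulVec, Finset.mul_sum, map_sum, _root_.map_mul, Pi.star_apply,
    Complex.star_def, Complex.conj_conj, transpose_apply, map_apply]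
  rw [Finset.sum_comm]
  apply Finset.sum_congr rfl; intro j _
  apply Finset.sum_congr rfl; intro i _
  ring

lemma q2_eq {m : ℕ} (A : Matrix (Fin m) (Fin m) ℂ) (y : Fin m → ℂ) :
    star y ⬝ᵥ (A.map (starRingEnd ℂ)) *ᵥ y
      = (starRingEnd ℂ) (star (star y) ⬝ᵥ A *ᵥ (star y)) := by
  simp only [dotProduct, mulVec, Finset.mul_sum, map_sum, _root_.map_mul, Pi.star_apply,
    Complex.star_def, Complex.conj_conj, map_apply]

set_option maxHeartbeats 1000000 in
/-- If `SH = Hᴴ S` and `SH` is Hermitian positive definite, then every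
eigenvalue `λ` of `H` satisfies `|λ| ≤ ρ(A)`, where `A` is the upper-left
block of `H`. -/
theorem stmt5 (m : ℕ)
    (A B : Matrix (Fin m) (Fin m) ℂ) (hA : A.IsHermitian) (hB : B.IsSymm)
    (H : Matrix (Fin m ⊕ Fin m) (Fin m ⊕ Fin m) ℂ)
    (hH : H = fromBlocks A B (-(B.map (starRingEnd ℂ))) (-(A.map (starRingEnd ℂ))))
    (hpd : (Smat m * H).PosDef)
    (v : (Fin m ⊕ Fin m) → ℂ) (hv : v ≠ 0) (lam : ℂ)
    (hright : H *ᵥ v = lam • v) :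
    ‖lam‖ ≤ specRad A := by
  classical
  obtain ⟨k, hk⟩ : ∃ k, v k ≠ 0 := by
    by_contra h; push_neg at h; exact hv (funext h)
  have hmn : Nonempty (Fin m) := ⟨k.elim id id⟩
  set t := specRad A with htdef
  have hbdd : BddAbove ((fun μ : ℂ => ‖μ‖) '' spectrum ℂ A) :=
    ((Matrix.finite_spectrum A).image _).bddAbove
  have hts : ∀ i : Fin m, |hA.eigenvalues i| ≤ t := by
    intro i
    have h1 : ((hA.eigenvalues i : ℝ) : ℂ) ∈ spectrum ℂ A :=
      spectrum.algebraMap_mem ℂ (hA.eigenvalues_mem_spectrum_real i)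
    have h2 : ‖((hA.eigenvalues i : ℝ) : ℂ)‖
        ∈ (fun μ : ℂ => ‖μ‖) '' spectrum ℂ A := ⟨_, h1, rfl⟩
    simpa [Complex.norm_real, htdef, specRad] using le_csSup hbdd h2
  have ht0 : 0 ≤ t := le_trans (abs_nonneg _) (hts (Classical.arbitrary _))
  set x : Fin m → ℂ := fun i => v (Sum.inl i) with hxdef
  set y : Fin m → ℂ := fun i => v (Sum.inr i) with hydef
  have hv' : v = Sum.elim x y := by funext i; cases i <;> rfl
  have heq := hright
  rw [hH, hv', fromBlocks_mulVec] at heq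
  simp only [Sum.elim_comp_inl, Sum.elim_comp_inr] at heq
  have e1 : A *ᵥ x + B *ᵥ y = lam • x := by
    funext i; have := congrFun heq (Sum.inl i); simpa using this
  have e2 : (B.map (starRingEnd ℂ)) *ᵥ x + (A.map (starRingEnd ℂ)) *ᵥ y = -(lam • y) := by
    funext i
    have h := congrFun heq (Sum.inr i)
    simp only [Sum.elim_inr, Pi.add_apply, Pi.smul_apply, neg_mulVec, Pi.neg_apply] at h
    simp only [Pi.add_apply, Pi.neg_apply, Pi.smul_apply]
    linear_combination -h
  -- real norms
  set a : ℝ := ∑ i, Complex.normSq (x i) with hadef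
  set b : ℝ := ∑ i, Complex.normSq (y i) with hbdef
  have hnx : star x ⬝ᵥ x = ((a : ℝ) : ℂ) := by
    rw [hadef]; push_cast
    simp only [dotProduct, Pi.star_apply]
    congr 1; ext i
    rw [Complex.normSq_eq_conj_mul_self, Complex.star_def]
  have hny : star y ⬝ᵥ y = ((b : ℝ) : ℂ) := by
    rw [hbdef]; push_cast
    simp only [dotProduct, Pi.star_apply]
    congr 1; ext i
    rw [Complex.normSq_eq_conj_mul_self, Complex.star_def]
  have ha0 : 0 ≤ a := Finset.sum_nonneg fun i _ => Complex.normSq_nonneg _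
  have hb0 : 0 ≤ b := Finset.sum_nonneg fun i _ => Complex.normSq_nonneg _
  -- positivity : 0 < lam * (a - b)
  have hMv : (Smat m * H) *ᵥ v = lam • (Smat m *ᵥ v) := by
    rw [← mulVec_mulVec, hright, mulVec_smul]
  have hSv : Smat m *ᵥ v = Sum.elim x (-y) := by
    rw [hv', Smat, fromBlocks_mulVec]
    simp [neg_mulVec]
  have hpos := hpd.dotProduct_mulVec_pos hv
  rw [hMv, hSv] at hpos
  have hstar : star v = Sum.elim (star x) (star y) := by
    rw [hv']; funext i; cases i <;> rfl
  have hsv : star v ⬝ᵥ (lam • Sum.elim x (-y)) = lam * (((a - b : ℝ)) : ℂ) := by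
    rw [dotProduct_smul, hstar, sumElim_dotProduct_sumElim, dotProduct_neg, hnx, hny,
      smul_eq_mul]
    push_cast
    ring
  rw [hsv] at hpos
  have hpos' := Complex.lt_def.mp hpos
  have hre : 0 < lam.re * (a - b) := by
    have := hpos'.1
    simpa [Complex.mul_re] using this
  have him : lam.im = 0 := by
    have h0 : lam.im * (a - b) = 0 := by
      have := hpos'.2
      simpa [Complex.mul_im] using this.symm
    have hab : a - b ≠ 0 := by
      intro h; rw [h, mul_zero] at hre; exact lt_irrefl 0 hre
    exact (mul_eq_zero.mp h0).resolve_right hab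
  -- nonnegativity of the quadratic form of A
  have hM : Smat m * H = fromBlocks A B (B.map (starRingEnd ℂ)) (A.map (starRingEnd ℂ)) := by
    rw [hH, Smat]
    simp [fromBlocks_multiply]
  have hApos : ∀ u : Fin m → ℂ, 0 ≤ (star u ⬝ᵥ A *ᵥ u).re := by
    intro u
    by_cases hu : u = (0 : Fin m → ℂ)
    · simp [hu]
    · have hu' : (Sum.elim u 0 : Fin m ⊕ Fin m → ℂ) ≠ 0 := by
        intro h0; apply hu; funext i; exact congrFun h0 (Sum.inl i)
      have h := hpd.dotProduct_mulVec_pos hu'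
      have hcalc : star (Sum.elim u (0 : Fin m → ℂ)) ⬝ᵥ (Smat m * H) *ᵥ Sum.elim u 0
          = star u ⬝ᵥ A *ᵥ u := by
        have hst : star (Sum.elim u (0 : Fin m → ℂ))
            = Sum.elim (star u) (0 : Fin m → ℂ) := by
          funext i; cases i <;> simp
        rw [hM, fromBlocks_mulVec, hst, sumElim_dotProduct_sumElim]
        simp
      rw [hcalc] at h
      have := (Complex.lt_def.mp h).1
      simpa using this.le
  -- scalar equations
  have s1 : star x ⬝ᵥ (A *ᵥ x) + star x ⬝ᵥ (B *ᵥ y) = lam * ((a : ℝ) : ℂ) := by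
    rw [← dotProduct_add, e1, dotProduct_smul, hnx, smul_eq_mul]
  have s2 : star y ⬝ᵥ ((B.map (starRingEnd ℂ)) *ᵥ x)
      + star y ⬝ᵥ ((A.map (starRingEnd ℂ)) *ᵥ y) = -(lam * ((b : ℝ) : ℂ)) := by
    rw [← dotProduct_add, e2, dotProduct_neg, dotProduct_smul, hny, smul_eq_mul]
  have hBt : (B.map (starRingEnd ℂ))ᵀ = B.map (starRingEnd ℂ) := by
    rw [← Matrix.transpose_map, hB]
  have hcp : star y ⬝ᵥ ((B.map (starRingEnd ℂ)) *ᵥ x)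
      = (starRingEnd ℂ) (star x ⬝ᵥ (B *ᵥ y)) := by
    rw [conj_dot B x y, hBt]
  rw [hcp] at s2
  -- real parts
  set q1 : ℝ := (star x ⬝ᵥ (A *ᵥ x)).re with hq1def
  set p : ℝ := (star x ⬝ᵥ (B *ᵥ y)).re with hpdef
  set q2 : ℝ := (star (star y) ⬝ᵥ (A *ᵥ (star y))).re with hq2def
  have hq2eq : (star y ⬝ᵥ ((A.map (starRingEnd ℂ)) *ᵥ y)).re = q2 := by
    rw [q2_eq A y, Complex.conj_re, hq2def]
  have s1re : q1 + p = lam.re * a := by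
    have h := congrArg Complex.re s1
    simpa [Complex.add_re, Complex.mul_re] using h
  have s2re : p + q2 = -(lam.re * b) := by
    have h := congrArg Complex.re s2
    rw [Complex.add_re, Complex.conj_re, hq2eq] at h
    simpa [Complex.mul_re] using h
  -- bounds
  have r1 : q1 ≤ t * a := by
    have h := rayleigh hA hts x
    rw [hnx, Complex.ofReal_re] at h
    exact h
  have hb2 : star (star y) ⬝ᵥ (star y) = ((b : ℝ) : ℂ) := by
    rw [star_star, hbdef]; push_cast
    simp only [dotProduct, Pi.star_apply]
    congr 1; ext i
    rw [Complex.star_def, ← Complex.mul_conj]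
  have r2 : q2 ≤ t * b := by
    have h := rayleigh hA hts (star y)
    rw [hb2, Complex.ofReal_re] at h
    exact h
  have r1n : 0 ≤ q1 := hApos x
  have r2n : 0 ≤ q2 := hApos (star y)
  -- a + b > 0
  have habne : a - b ≠ 0 := by
    intro h; rw [h, mul_zero] at hre; exact lt_irrefl 0 hre
  have habpos : 0 < a + b := by
    rcases lt_or_gt_of_ne habne with h | h
    · nlinarith
    · nlinarith
  -- final
  have hlamre : |lam.re| ≤ t := by
    have key : lam.re * (a + b) = q1 - q2 := by linarith
    rcases le_or_gt 0 lam.re with h | h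
    · rw [abs_of_nonneg h]
      have h1 : lam.re * (a + b) ≤ t * (a + b) := by nlinarith
      exact le_of_mul_le_mul_right (by linarith [h1]) habpos
    · rw [abs_of_neg h]
      have h1 : (-lam.re) * (a + b) ≤ t * (a + b) := by nlinarith
      exact le_of_mul_le_mul_right (by linarith [h1]) habpos
  have habs : ‖lam‖ = |lam.re| := by
    rw [Complex.norm_def, Complex.normSq_apply, him]
    simp [Real.sqrt_mul_self_eq_abs]
  rw [habs]
  exact hlamre
end
end

section
/- With Q_L := SQ(Q*SQ)⁻¹ as above and for any vectors u, v with u = Sv, one has ‖(I − Π(Q_L))u‖₂ = ‖(I − Π(Q))v‖₂: the left eigenvector is approximated by the dual basis exactly as well as the right eigenvector is approximated by Q. -/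
open Matrix

noncomputable section

/-- Euclidean norm of a complex vector. -/
def enorm' {a : Type*} [Fintype a] (v : a → ℂ) : ℝ :=
  Real.sqrt (∑ i, ‖v i‖ ^ 2)

/-- With `Q_L := SQ(QᴴSQ)⁻¹` and `u = Sv`, the dual basis approximates the left
vector `u` exactly as well as `Q` approximates the right vector `v`:
`‖(I − Π(Q_L))u‖₂ = ‖(I − Π(Q))v‖₂`. -/
theorem stmt13 (m k : ℕ)
    (Q : Matrix (Fin m ⊕ Fin m) (Fin k) ℂ) (hQ : Qᴴ * Q = 1)
    (hinv : IsUnit (Qᴴ * Smat m * Q).det)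
    (QL : Matrix (Fin m ⊕ Fin m) (Fin k) ℂ)
    (hQL : QL = Smat m * Q * (Qᴴ * Smat m * Q)⁻¹)
    (u v : (Fin m ⊕ Fin m) → ℂ) (huv : u = Smat m *ᵥ v) :
    enorm' (u - (QL * (QLᴴ * QL)⁻¹ * QLᴴ) *ᵥ u)
      = enorm' (v - (Q * (Qᴴ * Q)⁻¹ * Qᴴ) *ᵥ v) := by
  set S := Smat m with hSdef
  have hSH : Sᴴ = S := by simp [hSdef, Smat, fromBlocks_conjTranspose]
  have hSS : S * S = 1 := by simp [hSdef, Smat, fromBlocks_multiply, ← fromBlocks_one]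
  set M := Qᴴ * S * Q with hMdef
  have hMH : Mᴴ = M := by
    rw [hMdef, conjTranspose_mul, conjTranspose_mul, conjTranspose_conjTranspose, hSH,
      Matrix.mul_assoc]
  have hM1 : M⁻¹ * M = 1 := nonsing_inv_mul _ hinv
  have hM2 : M * M⁻¹ = 1 := mul_nonsing_inv _ hinv
  have hMinvH : (M⁻¹)ᴴ = M⁻¹ := by rw [conjTranspose_nonsing_inv, hMH]
  have hQLH : QLᴴ = M⁻¹ * (Qᴴ * S) := by
    rw [hQL, conjTranspose_mul, conjTranspose_mul, hSH, hMinvH]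
  have hGram : QLᴴ * QL = M⁻¹ * M⁻¹ := by
    rw [hQLH, hQL]
    simp only [Matrix.mul_assoc]
    rw [← Matrix.mul_assoc S S, hSS, Matrix.one_mul, ← Matrix.mul_assoc Qᴴ Q, hQ,
      Matrix.one_mul]
  have hGraminv : (QLᴴ * QL)⁻¹ = M * M := by
    apply inv_eq_right_inv
    rw [hGram]
    simp only [Matrix.mul_assoc]
    rw [← Matrix.mul_assoc M⁻¹ M, hM1, Matrix.one_mul, hM1]
  have hproj : QL * (QLᴴ * QL)⁻¹ * QLᴴ = S * (Q * Qᴴ) * S := by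
    rw [hGraminv, hQLH, hQL]
    simp only [Matrix.mul_assoc]
    rw [← Matrix.mul_assoc M⁻¹ M, hM1, Matrix.one_mul, ← Matrix.mul_assoc M M⁻¹, hM2,
      Matrix.one_mul]
  have hvec : u - (QL * (QLᴴ * QL)⁻¹ * QLᴴ) *ᵥ u
      = S *ᵥ (v - (Q * (Qᴴ * Q)⁻¹ * Qᴴ) *ᵥ v) := by
    rw [hproj, huv, hQ, inv_one, Matrix.mul_one, Matrix.mulVec_sub]
    congr 1
    rw [mulVec_mulVec, mulVec_mulVec, Matrix.mul_assoc (S * (Q * Qᴴ)), hSS, Matrix.mul_one]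
  have habs : ∀ (w : (Fin m ⊕ Fin m) → ℂ) (i : Fin m ⊕ Fin m),
      ‖(S *ᵥ w) i‖ = ‖w i‖ := by
    intro w i
    cases i with
    | inl i => simp [hSdef, Smat, mulVec, dotProduct, Fintype.sum_sum_type, one_apply,
        Finset.sum_ite_eq']
    | inr i => simp [hSdef, Smat, mulVec, dotProduct, Fintype.sum_sum_type, one_apply,
        Finset.sum_ite_eq']
  rw [hvec]
  unfold enorm'
  congr 1
  exact Finset.sum_congr rfl fun i _ => by rw [habs]
end
end

section
/- Let (λ, u, v) be an exact eigen-triplet of H (u*H = λu*, Hv = λv) and (λ̃, ũ, ṽ) approximations with ‖u‖=‖v‖=‖ũ‖=‖ṽ‖=1, δ̃ := ũ*ṽ ≠ 0, and decompositions ũ = γ_u u + σ_u e_u, ṽ = γ_v v + σ_v e_v with e_u ⊥ u, e_v ⊥ v, ‖e_u‖ = ‖e_v‖ = 1. If λ̃ = δ̃⁻¹ ũ*Hṽ, then |λ − λ̃| ≤ |δ̃|⁻¹ · |conj(σ_u)·σ_v| · ‖H − λI‖₂. -/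
open Matrix

noncomputable section

/-- Spectral (operator 2-) norm of a square complex matrix. -/
def opNorm {a b : Type*} [Fintype a] [Fintype b] [DecidableEq b]
    (M : Matrix a b ℂ) : ℝ :=
  ‖LinearMap.toContinuousLinearMap (Matrix.toEuclideanLin M)‖

lemma enorm_eq {n : ℕ} (x : Fin n → ℂ) :
    enorm' x = ‖(WithLp.equiv 2 (Fin n → ℂ)).symm x‖ := by
  rw [EuclideanSpace.norm_eq, enorm']
  rfl

lemma key_bound {n : ℕ} (M : Matrix (Fin n) (Fin n) ℂ) (x y : Fin n → ℂ) :
    ‖star x ⬝ᵥ (M *ᵥ y)‖ ≤ enorm' x * (opNorm M * enorm' y) := by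
  have h : star x ⬝ᵥ (M *ᵥ y)
      = inner ℂ ((WithLp.equiv 2 (Fin n → ℂ)).symm x)
          (Matrix.toEuclideanLin M ((WithLp.equiv 2 (Fin n → ℂ)).symm y)) := by
    rw [dotProduct_comm]; rfl
  rw [h]
  calc ‖(inner ℂ ((WithLp.equiv 2 (Fin n → ℂ)).symm x)
        (Matrix.toEuclideanLin M ((WithLp.equiv 2 (Fin n → ℂ)).symm y)))‖
      ≤ ‖(WithLp.equiv 2 (Fin n → ℂ)).symm x‖
          * ‖Matrix.toEuclideanLin M ((WithLp.equiv 2 (Fin n → ℂ)).symm y)‖ :=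
        by simpa using norm_inner_le_norm ((WithLp.equiv 2 (Fin n → ℂ)).symm x) (Matrix.toEuclideanLin M ((WithLp.equiv 2 (Fin n → ℂ)).symm y))
    _ ≤ enorm' x * (opNorm M * enorm' y) := by
        rw [← enorm_eq]
        apply mul_le_mul_of_nonneg_left _ (Real.sqrt_nonneg _)
        rw [enorm_eq]
        exact (LinearMap.toContinuousLinearMap (Matrix.toEuclideanLin M)).le_opNorm _

/-- Error bound for the oblique Rayleigh quotient: if `(λ, u, v)` is an exact
eigen-triplet, `ũ = γᵤu + σᵤeᵤ`, `ṽ = γᵥv + σᵥeᵥ` are unit approximations with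
`eᵤ ⊥ u`, `eᵥ ⊥ v`, `δ̃ := ũᴴṽ ≠ 0`, and `λ̃ = δ̃⁻¹ ũᴴHṽ`, then
`|λ − λ̃| ≤ |δ̃|⁻¹ |conj(σᵤ)σᵥ| ‖H − λI‖₂`. -/
theorem stmt17 (n : ℕ)
    (H : Matrix (Fin n) (Fin n) ℂ)
    (lam : ℂ) (u v eu ev ut vt : Fin n → ℂ)
    (gu su gv sv : ℂ)
    (hleft : star u ᵥ* H = lam • star u)
    (hright : H *ᵥ v = lam • v)
    (hnu : enorm' u = 1) (hnv : enorm' v = 1)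
    (hnut : enorm' ut = 1) (hnvt : enorm' vt = 1)
    (hneu : enorm' eu = 1) (hnev : enorm' ev = 1)
    (hdecu : ut = gu • u + su • eu)
    (hdecv : vt = gv • v + sv • ev)
    (hperpu : star u ⬝ᵥ eu = 0)
    (hperpv : star v ⬝ᵥ ev = 0)
    (hdelta : star ut ⬝ᵥ vt ≠ 0)
    (lamt : ℂ)
    (hlamt : lamt = (star ut ⬝ᵥ vt)⁻¹ * (star ut ⬝ᵥ (H *ᵥ vt))) :
    ‖lam - lamt‖
      ≤ ‖star ut ⬝ᵥ vt‖⁻¹ * ‖(starRingEnd ℂ) su * sv‖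
          * opNorm (H - lam • 1) := by
  set M : Matrix (Fin n) (Fin n) ℂ := H - lam • 1 with hM
  set δ : ℂ := star ut ⬝ᵥ vt with hδ
  have hMv : M *ᵥ v = 0 := by
    simp [hM, Matrix.sub_mulVec, Matrix.smul_mulVec, hright]
  have huM : star u ᵥ* M = 0 := by
    have h1 : star u ᵥ* (lam • (1 : Matrix (Fin n) (Fin n) ℂ)) = lam • star u := by
      ext i
      simp [Matrix.vecMul, dotProduct, Matrix.one_apply, mul_comm]
    simp [hM, Matrix.vecMul_sub, Matrix.sub_vecMul, h1, hleft]
  have huMx : ∀ x : Fin n → ℂ, star u ⬝ᵥ (M *ᵥ x) = 0 := by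
    intro x
    rw [Matrix.dotProduct_mulVec, huM, zero_dotProduct]
  have hkey : star ut ⬝ᵥ (M *ᵥ vt)
      = (starRingEnd ℂ) su * sv * (star eu ⬝ᵥ (M *ᵥ ev)) := by
    rw [hdecu, hdecv]
    have : star (gu • u + su • eu) = (starRingEnd ℂ) gu • star u
        + (starRingEnd ℂ) su • star eu := by
      ext i; simp [mul_comm]
    rw [this]
    simp only [Matrix.mulVec_add, Matrix.mulVec_smul, add_dotProduct,
      smul_dotProduct, dotProduct_add, dotProduct_smul,
      hMv, dotProduct_zero, huMx, smul_zero, smul_eq_mul, mul_zero,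
      zero_add, add_zero]
    ring
  have hdiff : lam - lamt = -(δ⁻¹ * (star ut ⬝ᵥ (M *ᵥ vt))) := by
    have hexp : star ut ⬝ᵥ (M *ᵥ vt) = star ut ⬝ᵥ (H *ᵥ vt) - lam * δ := by
      simp [hM, Matrix.sub_mulVec, Matrix.smul_mulVec, dotProduct_sub,
        dotProduct_smul, hδ, smul_eq_mul]
    rw [hlamt, hexp]
    field_simp
    ring
  rw [hdiff, norm_neg, hkey, norm_mul, norm_mul, norm_inv]
  have hb := key_bound M eu ev
  rw [hneu, hnev, one_mul, mul_one] at hb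
  calc ‖δ‖⁻¹
        * (‖(starRingEnd ℂ) su * sv‖ * ‖star eu ⬝ᵥ (M *ᵥ ev)‖)
      ≤ ‖δ‖⁻¹ * (‖(starRingEnd ℂ) su * sv‖ * opNorm M) :=
        mul_le_mul_of_nonneg_left
          (mul_le_mul_of_nonneg_left hb (by positivity)) (by positivity)
    _ = ‖δ‖⁻¹ * ‖(starRingEnd ℂ) su * sv‖ * opNorm M := by ring
end
end
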